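/- Consider the single-node general discrete model over horizon n. The optimal expected total payoff, i.e., the supremum of P(F) over all admissible policies F, equals γ_1^0. -/

import Mathlib

open MeasureTheory ProbabilityTheory

set_option linter.unusedSectionVars false
set_option linter.unusedVariables false
set_option linter.deprecated false

namespace EHDiscrete

variable {Ω : Type*} [MeasurableSpace Ω]

/-- Carryover energy: `c 0 = 0`, `c k = min (c (k-1) + E k) B - F k`. -/
def carry (B : ℕ) (Earr F : ℕ → Ω → ℕ) : ℕ → Ω → ℕ
  | 0 => fun _ => 0
  | k + 1 => fun ω => min (carry B Earr F k ω + Earr (k + 1) ω) B - F (k + 1) ω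

/-- Available energy `U_k = min (c_{k-1} + E_k) B`. -/
def avail (B : ℕ) (Earr F : ℕ → Ω → ℕ) (k : ℕ) (ω : Ω) : ℕ :=
  min (carry B Earr F (k - 1) ω + Earr k ω) B

/-- The σ-algebra generated by the history `(E_1, …, E_k, h_1, …, h_k)`. -/
def hist (Earr : ℕ → Ω → ℕ) (h : ℕ → Ω → ℝ) (k : ℕ) : MeasurableSpace Ω :=
  MeasurableSpace.comap
    (fun ω => ((fun i : Fin k => Earr (i.1 + 1) ω), (fun i : Fin k => h (i.1 + 1) ω)))
    inferInstance

/-- Admissible policy (general discrete consumption): `F_k ≤ U_k`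
(hence `F_k ∈ {0, …, B}`), and `F_k` is a measurable function of
`(E_1, …, E_k, h_1, …, h_k)`. -/
def IsPolicy (n B : ℕ) (Earr : ℕ → Ω → ℕ) (h : ℕ → Ω → ℝ) (F : ℕ → Ω → ℕ) : Prop :=
  (∀ k, 1 ≤ k → k ≤ n → ∀ ω, F k ω ≤ avail B Earr F k ω) ∧
  (∀ k, 1 ≤ k → k ≤ n → Measurable[hist Earr h k] (F k))

/-- Expected total payoff `P(F) = E [∑_{k=1}^n log (1 + F_k h_k)]`. -/
noncomputable def payoff (μ : Measure Ω) (n : ℕ) (h : ℕ → Ω → ℝ) (F : ℕ → Ω → ℕ) : ℝ :=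
  ∫ ω, ∑ k ∈ Finset.Icc 1 n, Real.log (1 + (F k ω : ℝ) * h k ω) ∂μ

/-- `α^m(x) = max_{j ∈ {0, …, m}} (log (1 + j·x) + g (m - j))`. -/
noncomputable def alphaD (g : ℕ → ℝ) (m : ℕ) (x : ℝ) : ℝ :=
  (Finset.range (m + 1)).sup' (Finset.nonempty_range_iff.mpr (Nat.succ_ne_zero m))
    (fun j => Real.log (1 + (j : ℝ) * x) + g (m - j))

/-- Values, indexed backwards: `gAuxD φ B pr j m = γ_{n-j}^m`, where
`γ_n^m = E[log (1 + h·min (m + E) B)]` and, for `k < n`,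
`γ_k^m = ∑_{i=0}^{B-m-1} p_i E[α_{k+1}^{i+m}] + (∑_{i=B-m}^B p_i) E[α_{k+1}^B]`. -/
noncomputable def gAuxD (φ : Measure ℝ) (B : ℕ) (pr : ℕ → ℝ) : ℕ → ℕ → ℝ
  | 0, m => ∑ i ∈ Finset.range (B + 1),
      pr i * ∫ x, Real.log (1 + x * ((min (m + i) B : ℕ) : ℝ)) ∂φ
  | j + 1, m =>
      (∑ i ∈ Finset.range (B - m),
        pr i * ∫ x, alphaD (fun l => gAuxD φ B pr j l) (i + m) x ∂φ)
        + (∑ i ∈ Finset.Icc (B - m) B, pr i)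
          * ∫ x, alphaD (fun l => gAuxD φ B pr j l) B x ∂φ

/-- `γ_k^m` for slots `1 ≤ k ≤ n`, with the convention `γ_k^m = 0` for `k > n`. -/
noncomputable def gammaSlotD (n : ℕ) (φ : Measure ℝ) (B : ℕ) (pr : ℕ → ℝ) (k m : ℕ) : ℝ :=
  if k ≤ n then gAuxD φ B pr (n - k) m else 0

/-- A policy is greedy if, at each slot, the transmitted amount attains the
maximum of `log (1 + j·h_k) + γ_{k+1}^{U_k - j}` over `j ∈ {0, …, U_k}`. -/
def IsGreedy (n B : ℕ) (φ : Measure ℝ) (pr : ℕ → ℝ) (Earr : ℕ → Ω → ℕ)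
    (h : ℕ → Ω → ℝ) (F : ℕ → Ω → ℕ) : Prop :=
  ∀ k, 1 ≤ k → k ≤ n → ∀ ω, ∀ j ≤ avail B Earr F k ω,
    Real.log (1 + (j : ℝ) * h k ω) + gammaSlotD n φ B pr (k + 1) (avail B Earr F k ω - j)
      ≤ Real.log (1 + (F k ω : ℝ) * h k ω)
        + gammaSlotD n φ B pr (k + 1) (avail B Earr F k ω - F k ω)


/-! aux -/


lemma le_alphaD (g : ℕ → ℝ) {m j : ℕ} (hj : j ≤ m) (x : ℝ) :
    Real.log (1 + (j : ℝ) * x) + g (m - j) ≤ alphaD g m x := by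
  unfold alphaD
  exact Finset.le_sup' (fun j : ℕ => Real.log (1 + (j : ℝ) * x) + g (m - j))
    (Finset.mem_range.mpr (Nat.lt_succ_of_le hj))

lemma alphaD_le (g : ℕ → ℝ) (m : ℕ) (x : ℝ) {c : ℝ}
    (hc : ∀ j ≤ m, Real.log (1 + (j : ℝ) * x) + g (m - j) ≤ c) : alphaD g m x ≤ c := by
  unfold alphaD
  exact Finset.sup'_le _ _ fun j hj => hc j (Nat.lt_succ_iff.mp (Finset.mem_range.mp hj))

lemma measurable_finset_sup' {α : Type*} [MeasurableSpace α] (s : Finset ℕ) (hs : s.Nonempty)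
    (f : ℕ → α → ℝ) (hf : ∀ i, Measurable (f i)) :
    Measurable (fun x => s.sup' hs (fun i => f i x)) := by
  induction hs using Finset.Nonempty.cons_induction with
  | singleton i => simp only [Finset.sup'_singleton]; exact hf i
  | cons i s his hs ih =>
      rw [show (fun x => (Finset.cons i s his).sup' (Finset.cons_nonempty his) (fun j => f j x)) = (fun x => f i x ⊔ s.sup' hs (fun j => f j x)) from funext fun x => Finset.sup'_cons hs (fun j => f j x)]
      exact (hf i).max ih

lemma measurable_log_term (j : ℕ) (c : ℝ) :
    Measurable (fun x : ℝ => Real.log (1 + (j : ℝ) * x) + c) :=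
  (Real.measurable_log.comp (measurable_const.add (measurable_id.const_mul _))).add
    measurable_const

lemma measurable_alphaD (g : ℕ → ℝ) (m : ℕ) : Measurable (alphaD g m) := by
  unfold alphaD
  exact measurable_finset_sup' _ _ _ fun j => measurable_log_term j _

lemma log_term_nonneg {x : ℝ} (hx : 0 ≤ x) (j : ℕ) : 0 ≤ Real.log (1 + (j : ℝ) * x) :=
  Real.log_nonneg (by nlinarith [Nat.cast_nonneg (α := ℝ) j])

lemma log_term_mono {x : ℝ} (hx : 0 ≤ x) {j m : ℕ} (hj : j ≤ m) :
    Real.log (1 + (j : ℝ) * x) ≤ Real.log (1 + (m : ℝ) * x) := by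
  have : (j : ℝ) * x ≤ (m : ℝ) * x := mul_le_mul_of_nonneg_right (Nat.cast_le.mpr hj) hx
  exact Real.log_le_log (by nlinarith [Nat.cast_nonneg (α := ℝ) j]) (by linarith)

/-- For `x ≥ 0`, `alphaD` with trivial continuation is just `log (1 + m x)`. -/
lemma alphaD_zero_fun {x : ℝ} (hx : 0 ≤ x) (m : ℕ) :
    alphaD (fun _ => 0) m x = Real.log (1 + (m : ℝ) * x) := by
  refine le_antisymm (alphaD_le _ _ _ fun j hj => ?_) ?_
  · simpa using log_term_mono hx hj
  · simpa using le_alphaD (fun _ => 0) (le_refl m) x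

/-! integrability on the φ side -/

lemma integrable_log_j {φ : Measure ℝ} {B : ℕ}
    (hint : Integrable (fun x => Real.log (1 + (B : ℝ) * x)) φ)
    (hφpos : ∀ᵐ x ∂φ, 0 ≤ x) {j : ℕ} (hj : j ≤ B) :
    Integrable (fun x => Real.log (1 + (j : ℝ) * x)) φ := by
  have hme : Measurable (fun x : ℝ => Real.log (1 + (j : ℝ) * x)) :=
    Real.measurable_log.comp (measurable_const.add (measurable_id.const_mul _))
  refine hint.mono hme.aestronglyMeasurable ?_
  filter_upwards [hφpos] with x hx
  rw [Real.norm_eq_abs, Real.norm_eq_abs, abs_of_nonneg (log_term_nonneg hx j),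
    abs_of_nonneg (log_term_nonneg hx B)]
  exact log_term_mono hx hj

lemma integrable_alphaD {φ : Measure ℝ} [IsProbabilityMeasure φ] {B : ℕ}
    (hint : Integrable (fun x => Real.log (1 + (B : ℝ) * x)) φ)
    (hφpos : ∀ᵐ x ∂φ, 0 ≤ x) (g : ℕ → ℝ) {m : ℕ} (hm : m ≤ B) :
    Integrable (alphaD g m) φ := by
  set D : ℝ := ∑ l ∈ Finset.range (B + 1), |g l| with hD
  have hDle : ∀ l ≤ B, |g l| ≤ D := fun l hl =>
    Finset.single_le_sum (f := fun l => |g l|) (fun i _ => abs_nonneg _)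
      (Finset.mem_range.mpr (Nat.lt_succ_of_le hl))
  refine Integrable.mono' (hint.add (integrable_const D))
    (measurable_alphaD g m).aestronglyMeasurable ?_
  filter_upwards [hφpos] with x hx
  rw [Real.norm_eq_abs, abs_le]
  simp only [Pi.add_apply]
  constructor
  · have h1 : -D ≤ g m := by
      have := hDle m hm; have := abs_nonneg (g m); have := neg_abs_le (g m); linarith
    have h2 : g m ≤ alphaD g m x := by simpa using le_alphaD g (Nat.zero_le m) x
    have h3 : 0 ≤ Real.log (1 + (B : ℝ) * x) := log_term_nonneg hx B
    linarith
  · refine alphaD_le _ _ _ fun j hj => ?_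
    have h1 : Real.log (1 + (j : ℝ) * x) ≤ Real.log (1 + (B : ℝ) * x) :=
      log_term_mono hx (le_trans hj hm)
    have h2 : g (m - j) ≤ D := le_trans (le_abs_self _) (hDle _ (by omega))
    linarith

/-! the argmax selector -/

lemma pick_exists (g : ℕ → ℝ) (u : ℕ) (x : ℝ) :
    ∃ j, j ≤ u ∧ ∀ i ≤ u, Real.log (1 + (i : ℝ) * x) + g (u - i) ≤
      Real.log (1 + (j : ℝ) * x) + g (u - j) := by
  obtain ⟨j, hj, hmax⟩ := Finset.exists_max_image (Finset.range (u + 1))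
    (fun j => Real.log (1 + (j : ℝ) * x) + g (u - j)) ⟨0, Finset.mem_range.mpr (Nat.succ_pos u)⟩
  exact ⟨j, Nat.lt_succ_iff.mp (Finset.mem_range.mp hj),
    fun i hi => hmax i (Finset.mem_range.mpr (Nat.lt_succ_of_le hi))⟩

open Classical in
noncomputable def pick (g : ℕ → ℝ) (u : ℕ) (x : ℝ) : ℕ :=
  Nat.find (pick_exists g u x)

lemma pick_le (g : ℕ → ℝ) (u : ℕ) (x : ℝ) : pick g u x ≤ u :=
  (Nat.find_spec (pick_exists g u x)).1

lemma alphaD_pick (g : ℕ → ℝ) (u : ℕ) (x : ℝ) :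
    alphaD g u x = Real.log (1 + (pick g u x : ℝ) * x) + g (u - pick g u x) := by
  refine le_antisymm (alphaD_le _ _ _ fun j hj => (Nat.find_spec (pick_exists g u x)).2 j hj)
    (le_alphaD g (pick_le g u x) x)

lemma measurable_pick (g : ℕ → ℝ) (u : ℕ) : Measurable (pick g u) := by
  classical
  apply measurable_to_countable'
  intro j
  have hrepr : pick g u ⁻¹' {j} = {x : ℝ |
      (j ≤ u ∧ ∀ i ≤ u, Real.log (1 + (i : ℝ) * x) + g (u - i) ≤
        Real.log (1 + (j : ℝ) * x) + g (u - j)) ∧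
      ∀ m < j, ¬(m ≤ u ∧ ∀ i ≤ u, Real.log (1 + (i : ℝ) * x) + g (u - i) ≤
        Real.log (1 + (m : ℝ) * x) + g (u - m))} := by
    ext x
    simp only [Set.mem_preimage, Set.mem_singleton_iff, Set.mem_setOf_eq, pick]
    exact Nat.find_eq_iff (pick_exists g u x)
  rw [hrepr]
  have hA : ∀ m : ℕ, MeasurableSet {x : ℝ | m ≤ u ∧ ∀ i ≤ u,
      Real.log (1 + (i : ℝ) * x) + g (u - i) ≤ Real.log (1 + (m : ℝ) * x) + g (u - m)} := by
    intro m
    by_cases hm : m ≤ u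
    · have : {x : ℝ | m ≤ u ∧ ∀ i ≤ u,
          Real.log (1 + (i : ℝ) * x) + g (u - i) ≤ Real.log (1 + (m : ℝ) * x) + g (u - m)}
          = ⋂ i : ℕ, {x : ℝ | i ≤ u →
            Real.log (1 + (i : ℝ) * x) + g (u - i) ≤ Real.log (1 + (m : ℝ) * x) + g (u - m)} := by
        ext x; simp [hm]
      rw [this]
      refine MeasurableSet.iInter fun i => ?_
      by_cases hi : i ≤ u
      · simp only [hi, forall_true_left]
        exact measurableSet_le (measurable_log_term i _) (measurable_log_term m _)
      · simp only [hi, IsEmpty.forall_iff]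
        simp [Set.setOf_true]
    · have : {x : ℝ | m ≤ u ∧ ∀ i ≤ u,
          Real.log (1 + (i : ℝ) * x) + g (u - i) ≤ Real.log (1 + (m : ℝ) * x) + g (u - m)}
          = ∅ := by ext x; simp [hm]
      rw [this]; exact MeasurableSet.empty
  have h1 : MeasurableSet {x : ℝ | ∀ m < j, ¬(m ≤ u ∧ ∀ i ≤ u,
      Real.log (1 + (i : ℝ) * x) + g (u - i) ≤ Real.log (1 + (m : ℝ) * x) + g (u - m))} := by
    rw [Set.setOf_forall]
    refine MeasurableSet.iInter fun m => ?_
    by_cases hm : m < j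
    · simp only [hm, forall_true_left]
      exact (hA m).compl
    · have : {x : ℝ | m < j → ¬(m ≤ u ∧ ∀ i ≤ u,
          Real.log (1 + (i : ℝ) * x) + g (u - i) ≤ Real.log (1 + (m : ℝ) * x) + g (u - m))}
          = Set.univ := by ext x; simp [hm]
      rw [this]; exact MeasurableSet.univ
  exact (hA j).inter h1

/-- measurability of `pick` composed with measurable data, w.r.t. any σ-algebra. -/
lemma measurable_pick_comp {Ω' : Type*} {m0 : MeasurableSpace Ω'} (g : ℕ → ℝ)
    {u : Ω' → ℕ} (hu : Measurable u) {x : Ω' → ℝ} (hx : Measurable x) :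
    Measurable (fun ω => pick g (u ω) (x ω)) := by
  apply measurable_to_countable'
  intro j
  have : (fun ω => pick g (u ω) (x ω)) ⁻¹' {j}
      = ⋃ v : ℕ, ({ω | u ω = v} ∩ x ⁻¹' (pick g v ⁻¹' {j})) := by
    ext ω
    simp only [Set.mem_preimage, Set.mem_singleton_iff, Set.mem_iUnion, Set.mem_inter_iff,
      Set.mem_setOf_eq]
    constructor
    · intro hp; exact ⟨u ω, rfl, hp⟩
    · rintro ⟨v, hv, hp⟩; rw [hv]; exact hp
  rw [this]
  exact MeasurableSet.iUnion fun v =>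
    (hu (measurableSet_singleton v)).inter (hx (measurable_pick g v (measurableSet_singleton j)))


/-! history σ-algebra lemmas -/

def Vmap (Earr : ℕ → Ω → ℕ) (h : ℕ → Ω → ℝ) (k : ℕ) (ω : Ω) : (Fin k → ℕ) × (Fin k → ℝ) :=
  ((fun i : Fin k => Earr (i.1 + 1) ω), (fun i : Fin k => h (i.1 + 1) ω))

lemma hist_eq_comap (Earr : ℕ → Ω → ℕ) (h : ℕ → Ω → ℝ) (k : ℕ) :
    hist Earr h k = MeasurableSpace.comap (Vmap Earr h k) inferInstance := rfl

variable {Earr : ℕ → Ω → ℕ} {h : ℕ → Ω → ℝ}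

lemma measurable_Vmap (hEm : ∀ k, Measurable (Earr k)) (hhm : ∀ k, Measurable (h k)) (k : ℕ) :
    Measurable (Vmap Earr h k) :=
  (measurable_pi_lambda _ fun _ => hEm _).prodMk (measurable_pi_lambda _ fun _ => hhm _)

lemma hist_le_ambient (hEm : ∀ k, Measurable (Earr k)) (hhm : ∀ k, Measurable (h k)) (k : ℕ) :
    hist Earr h k ≤ (inferInstance : MeasurableSpace Ω) := by
  rw [hist_eq_comap]
  exact (measurable_Vmap hEm hhm k).comap_le

lemma measurable_Vmap_hist (k : ℕ) : Measurable[hist Earr h k] (Vmap Earr h k) :=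
  measurable_iff_comap_le.mpr (le_of_eq (hist_eq_comap Earr h k).symm)

lemma measurable_Earr_hist {i k : ℕ} (hik : i < k) :
    Measurable[hist Earr h k] (fun ω => Earr (i + 1) ω) := by
  have he : (fun ω => Earr (i + 1) ω)
      = (fun p : (Fin k → ℕ) × (Fin k → ℝ) => p.1 ⟨i, hik⟩) ∘ Vmap Earr h k := rfl
  rw [he]
  exact ((measurable_pi_apply _).comp measurable_fst).comp (measurable_Vmap_hist k)

lemma measurable_h_hist {i k : ℕ} (hik : i < k) :
    Measurable[hist Earr h k] (fun ω => h (i + 1) ω) := by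
  have he : (fun ω => h (i + 1) ω)
      = (fun p : (Fin k → ℕ) × (Fin k → ℝ) => p.2 ⟨i, hik⟩) ∘ Vmap Earr h k := rfl
  rw [he]
  exact ((measurable_pi_apply _).comp measurable_snd).comp (measurable_Vmap_hist k)

lemma measurable_Earr_hist' {k : ℕ} (hk : 1 ≤ k) : Measurable[hist Earr h k] (Earr k) := by
  obtain ⟨m, rfl⟩ : ∃ m, k = m + 1 := ⟨k - 1, by omega⟩
  exact measurable_Earr_hist (Nat.lt_succ_self m)

lemma measurable_h_hist' {k : ℕ} (hk : 1 ≤ k) : Measurable[hist Earr h k] (h k) := by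
  obtain ⟨m, rfl⟩ : ∃ m, k = m + 1 := ⟨k - 1, by omega⟩
  exact measurable_h_hist (Nat.lt_succ_self m)

lemma hist_mono {j k : ℕ} (hjk : j ≤ k) : hist Earr h j ≤ hist Earr h k := by
  have hVeq : Vmap Earr h j = (fun p : (Fin k → ℕ) × (Fin k → ℝ) =>
      ((fun i : Fin j => p.1 ⟨i.1, lt_of_lt_of_le i.2 hjk⟩),
       (fun i : Fin j => p.2 ⟨i.1, lt_of_lt_of_le i.2 hjk⟩))) ∘ Vmap Earr h k := rfl
  rw [hist_eq_comap, hist_eq_comap, hVeq, ← MeasurableSpace.comap_comp]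
  exact MeasurableSpace.comap_mono (Measurable.comap_le
    ((measurable_pi_lambda _ fun _ => (measurable_pi_apply _).comp measurable_fst).prodMk
     (measurable_pi_lambda _ fun _ => (measurable_pi_apply _).comp measurable_snd)))

/-! carry and avail basics -/

lemma carry_le (B : ℕ) (F : ℕ → Ω → ℕ) : ∀ k ω, carry B Earr F k ω ≤ B := by
  intro k ω
  cases k with
  | zero => simp [carry]
  | succ k => simp only [carry]; omega

lemma avail_le (B : ℕ) (F : ℕ → Ω → ℕ) (k : ℕ) (ω : Ω) : avail B Earr F k ω ≤ B :=
  min_le_right _ _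

lemma carry_succ_eq (B : ℕ) (F : ℕ → Ω → ℕ) {k : ℕ} (hk : 1 ≤ k) (ω : Ω) :
    carry B Earr F k ω = avail B Earr F k ω - F k ω := by
  obtain ⟨m, rfl⟩ : ∃ m, k = m + 1 := ⟨k - 1, by omega⟩
  simp [carry, avail]

lemma measurable_carry_hist {n B : ℕ} (hEm : ∀ k, Measurable (Earr k))
    (hhm : ∀ k, Measurable (h k)) {F : ℕ → Ω → ℕ}
    (hFm : ∀ k, 1 ≤ k → k ≤ n → Measurable[hist Earr h k] (F k)) :
    ∀ k, k ≤ n → Measurable[hist Earr h k] (carry B Earr F k) := by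
  intro k
  induction k with
  | zero => intro _; exact measurable_const
  | succ k ih =>
      intro hkn
      have h1 : Measurable[hist Earr h (k + 1)] (carry B Earr F k) :=
        (ih (by omega)).mono (hist_mono (Nat.le_succ k)) le_rfl
      have h2 : Measurable[hist Earr h (k + 1)] (Earr (k + 1)) :=
        measurable_Earr_hist' (by omega)
      have h3 : Measurable[hist Earr h (k + 1)] (F (k + 1)) := hFm (k + 1) (by omega) hkn
      have : carry B Earr F (k + 1) =
          (fun p : ℕ × ℕ × ℕ => min (p.1 + p.2.1) B - p.2.2) ∘
            (fun ω => (carry B Earr F k ω, Earr (k + 1) ω, F (k + 1) ω)) := rfl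
      rw [this]
      exact (measurable_of_countable _).comp (h1.prodMk (h2.prodMk h3))

lemma measurable_avail_hist {n B : ℕ} (hEm : ∀ k, Measurable (Earr k))
    (hhm : ∀ k, Measurable (h k)) {F : ℕ → Ω → ℕ}
    (hFm : ∀ k, 1 ≤ k → k ≤ n → Measurable[hist Earr h k] (F k)) {k : ℕ}
    (hk : 1 ≤ k) (hkn : k ≤ n) : Measurable[hist Earr h k] (avail B Earr F k) := by
  have h1 : Measurable[hist Earr h k] (carry B Earr F (k - 1)) :=
    (measurable_carry_hist hEm hhm hFm (k - 1) (by omega)).mono (hist_mono (by omega)) le_rfl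
  have h2 : Measurable[hist Earr h k] (Earr k) := measurable_Earr_hist' hk
  have : avail B Earr F k = (fun p : ℕ × ℕ => min (p.1 + p.2) B) ∘
      (fun ω => (carry B Earr F (k - 1) ω, Earr k ω)) := rfl
  rw [this]
  exact (measurable_of_countable _).comp (h1.prodMk h2)

/-! representation over the finitely many values of an ℕ-valued variable -/

lemma indicator_sum_repr {B : ℕ} (Y : Ω → ℕ) (hYB : ∀ ω, Y ω ≤ B) (G : ℕ → Ω → ℝ) (ω : Ω) :
    G (Y ω) ω = ∑ m ∈ Finset.range (B + 1), Set.indicator {ω' | Y ω' = m} (G m) ω := by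
  rw [Finset.sum_eq_single_of_mem (Y ω) (Finset.mem_range.mpr (Nat.lt_succ_of_le (hYB ω)))]
  · rw [Set.indicator_of_mem (by exact rfl : ω ∈ {ω' | Y ω' = Y ω})]
  · intro b _ hb
    have hnm : ω ∉ {ω' | Y ω' = b} := fun hc => hb (Eq.symm hc)
    exact Set.indicator_of_notMem hnm _

lemma integrable_repr {μ : Measure Ω} {B : ℕ} {Y : Ω → ℕ} (hY : Measurable Y)
    (hYB : ∀ ω, Y ω ≤ B) {G : ℕ → Ω → ℝ} (hG : ∀ m, m ≤ B → Integrable (G m) μ) :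
    Integrable (fun ω => G (Y ω) ω) μ := by
  have e : (fun ω => G (Y ω) ω)
      = fun ω => ∑ m ∈ Finset.range (B + 1), Set.indicator {ω' | Y ω' = m} (G m) ω :=
    funext (indicator_sum_repr Y hYB G)
  rw [e]
  exact integrable_finset_sum _ fun m hm =>
    (hG m (by simp at hm; omega)).indicator (hY (measurableSet_singleton m))

lemma integral_repr {μ : Measure Ω} {B : ℕ} {Y : Ω → ℕ} (hY : Measurable Y)
    (hYB : ∀ ω, Y ω ≤ B) {G : ℕ → Ω → ℝ} (hG : ∀ m, m ≤ B → Integrable (G m) μ) :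
    ∫ ω, G (Y ω) ω ∂μ
      = ∑ m ∈ Finset.range (B + 1), ∫ ω, Set.indicator {ω' | Y ω' = m} (G m) ω ∂μ := by
  have e : (fun ω => G (Y ω) ω)
      = fun ω => ∑ m ∈ Finset.range (B + 1), Set.indicator {ω' | Y ω' = m} (G m) ω :=
    funext (indicator_sum_repr Y hYB G)
  rw [e]
  exact integral_finset_sum _ fun m hm =>
    (hG m (by simp at hm; omega)).indicator (hY (measurableSet_singleton m))

/-! probabilistic layer -/

section Prob

variable {μ : Measure Ω} [IsProbabilityMeasure μ] {n B : ℕ} {pr : ℕ → ℝ}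
  {φ : Measure ℝ} [IsProbabilityMeasure φ]

lemma phi_ae_nonneg (hn : 1 ≤ n) (hhm : ∀ k, Measurable (h k))
    (hlaw : ∀ k, 1 ≤ k → k ≤ n → Measure.map (h k) μ = φ) (hpos : ∀ k ω, 0 ≤ h k ω) :
    ∀ᵐ x ∂φ, 0 ≤ x := by
  rw [ae_iff]
  have hset : {x : ℝ | ¬0 ≤ x} = {x : ℝ | x < 0} := by ext x; simp [not_le]
  have hs0 : MeasurableSet {x : ℝ | x < 0} := measurableSet_lt measurable_id measurable_const
  rw [hset, ← hlaw 1 le_rfl hn, Measure.map_apply (hhm 1) hs0]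
  have hempty : (h 1) ⁻¹' {x | x < 0} = ∅ := by
    ext ω; simp only [Set.mem_preimage, Set.mem_setOf_eq, Set.mem_empty_iff_false, iff_false,
      not_lt]
    exact hpos 1 ω
  rw [hempty]; simp

lemma indep_hist_slot (hEm : ∀ k, Measurable (Earr k)) (hhm : ∀ k, Measurable (h k))
    (hindep : iIndepFun (m := fun _ : Fin n => (inferInstance : MeasurableSpace (ℕ × ℝ)))
      (fun k ω => (Earr (k.1 + 1) ω, h (k.1 + 1) ω)) μ)
    {k : ℕ} (hk1 : 1 ≤ k) (hkn : k ≤ n) :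
    IndepFun (Vmap Earr h (k - 1)) (fun ω => (Earr k ω, h k ω)) μ := by
  classical
  set X : Fin n → Ω → ℕ × ℝ := fun i ω => (Earr (i.1 + 1) ω, h (i.1 + 1) ω) with hX
  have hXm : ∀ i, Measurable (X i) := fun i => (hEm _).prodMk (hhm _)
  have hkn' : k - 1 < n := by omega
  set S : Finset (Fin n) := Finset.univ.filter (fun i => i.1 < k - 1) with hS
  set T : Finset (Fin n) := {⟨k - 1, hkn'⟩} with hT
  have hST : Disjoint S T := by
    rw [Finset.disjoint_left]
    intro a haS haT
    rw [hS, Finset.mem_filter] at haS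
    rw [hT, Finset.mem_singleton] at haT
    rw [haT] at haS
    exact absurd haS.2 (lt_irrefl _)
  have base := hindep.indepFun_finset S T hST hXm
  have hmem : ∀ i : Fin (k - 1), (⟨i.1, by omega⟩ : Fin n) ∈ S := by
    intro i; rw [hS, Finset.mem_filter]; exact ⟨Finset.mem_univ _, i.2⟩
  have hTmem : (⟨k - 1, hkn'⟩ : Fin n) ∈ T := Finset.mem_singleton_self _
  have hφm : Measurable (fun t : S → ℕ × ℝ =>
      ((fun i : Fin (k - 1) => (t ⟨⟨i.1, by omega⟩, hmem i⟩).1),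
       (fun i : Fin (k - 1) => (t ⟨⟨i.1, by omega⟩, hmem i⟩).2))) :=
    (measurable_pi_lambda _ fun _ => measurable_fst.comp (measurable_pi_apply _)).prodMk
      (measurable_pi_lambda _ fun _ => measurable_snd.comp (measurable_pi_apply _))
  have hψm : Measurable (fun t : T → ℕ × ℝ => t ⟨⟨k - 1, hkn'⟩, hTmem⟩) :=
    measurable_pi_apply _
  have hres := base.comp hφm hψm
  have e1 : (fun t : S → ℕ × ℝ =>
      ((fun i : Fin (k - 1) => (t ⟨⟨i.1, by omega⟩, hmem i⟩).1),
       (fun i : Fin (k - 1) => (t ⟨⟨i.1, by omega⟩, hmem i⟩).2)))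
        ∘ (fun a (i : S) => X i a) = Vmap Earr h (k - 1) := rfl
  have e2 : (fun t : T → ℕ × ℝ => t ⟨⟨k - 1, hkn'⟩, hTmem⟩) ∘ (fun a (i : T) => X i a)
      = fun ω => (Earr k ω, h k ω) := by
    funext ω
    show X ⟨k - 1, hkn'⟩ ω = _
    rw [hX]
    simp only
    rw [Nat.sub_add_cancel hk1]
  rw [e1, e2] at hres
  exact hres

lemma indicator_integral_factor (hEm : ∀ k, Measurable (Earr k)) (hhm : ∀ k, Measurable (h k))
    (hindep : iIndepFun (m := fun _ : Fin n => (inferInstance : MeasurableSpace (ℕ × ℝ)))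
      (fun k ω => (Earr (k.1 + 1) ω, h (k.1 + 1) ω)) μ)
    {k : ℕ} (hk1 : 1 ≤ k) (hkn : k ≤ n)
    {s : Set Ω} (hs : MeasurableSet[hist Earr h (k - 1)] s) {ψ : ℕ × ℝ → ℝ}
    (hψ : Measurable ψ) (hψint : Integrable (fun ω => ψ (Earr k ω, h k ω)) μ) :
    ∫ ω, Set.indicator s (fun ω' => ψ (Earr k ω', h k ω')) ω ∂μ
      = (μ s).toReal * ∫ ω, ψ (Earr k ω, h k ω) ∂μ := by
  rw [hist_eq_comap] at hs
  obtain ⟨t, ht, rfl⟩ := hs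
  set X1 : Ω → ℝ := fun ω => Set.indicator t (fun _ => (1 : ℝ)) (Vmap Earr h (k - 1) ω) with hX1def
  set Y1 : Ω → ℝ := fun ω => ψ (Earr k ω, h k ω) with hY1def
  have hind : IndepFun X1 Y1 μ :=
    (indep_hist_slot hEm hhm hindep hk1 hkn).comp (measurable_const.indicator ht) hψ
  have hmeas_s : MeasurableSet (Vmap Earr h (k - 1) ⁻¹' t) := measurable_Vmap hEm hhm _ ht
  have hX1eq : X1 = Set.indicator (Vmap Earr h (k - 1) ⁻¹' t) (fun _ => (1 : ℝ)) := by
    funext ω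
    show Set.indicator t (fun _ => (1:ℝ)) (Vmap Earr h (k - 1) ω) = _
    by_cases hω : Vmap Earr h (k - 1) ω ∈ t
    · rw [Set.indicator_of_mem hω, Set.indicator_of_mem (show ω ∈ Vmap Earr h (k - 1) ⁻¹' t from hω)]
    · rw [Set.indicator_of_notMem hω,
        Set.indicator_of_notMem (show ω ∉ Vmap Earr h (k - 1) ⁻¹' t from hω)]
  have hX1int : Integrable X1 μ := by
    rw [hX1eq]; exact (integrable_const 1).indicator hmeas_s
  have hprod : Set.indicator (Vmap Earr h (k - 1) ⁻¹' t) Y1 = X1 * Y1 := by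
    funext ω
    show _ = (fun ω => Set.indicator t (fun _ => (1:ℝ)) (Vmap Earr h (k-1) ω)) ω * Y1 ω
    simp only
    by_cases hω : Vmap Earr h (k - 1) ω ∈ t
    · rw [Set.indicator_of_mem (show ω ∈ Vmap Earr h (k - 1) ⁻¹' t from hω),
        Set.indicator_of_mem hω, one_mul]
    · rw [Set.indicator_of_notMem (show ω ∉ Vmap Earr h (k - 1) ⁻¹' t from hω),
        Set.indicator_of_notMem hω, zero_mul]
  have key : integral μ (X1 * Y1) = integral μ X1 * integral μ Y1 :=
    hind.integral_mul_eq_mul_integral hX1int.aestronglyMeasurable hψint.aestronglyMeasurable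
  have hX1int' : integral μ X1 = (μ (Vmap Earr h (k - 1) ⁻¹' t)).toReal := by
    rw [hX1eq]
    rw [integral_indicator_const (1 : ℝ) hmeas_s]
    simp
    rfl
  calc ∫ ω, Set.indicator (Vmap Earr h (k - 1) ⁻¹' t) (fun ω' => ψ (Earr k ω', h k ω')) ω ∂μ
      = integral μ (X1 * Y1) := by rw [← hprod]
    _ = (μ (Vmap Earr h (k - 1) ⁻¹' t)).toReal * ∫ ω, ψ (Earr k ω, h k ω) ∂μ := by
        rw [key, hX1int']

lemma slot_expectation (hEm : ∀ k, Measurable (Earr k)) (hhm : ∀ k, Measurable (h k))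
    (hlaw : ∀ k, 1 ≤ k → k ≤ n → Measure.map (h k) μ = φ)
    (hEB : ∀ k ω, Earr k ω ≤ B)
    (hEpr : ∀ k, 1 ≤ k → k ≤ n → ∀ i, i ≤ B → μ {ω | Earr k ω = i} = ENNReal.ofReal (pr i))
    (hpair : ∀ k, 1 ≤ k → k ≤ n → IndepFun (Earr k) (h k) μ)
    (hpr0 : ∀ i, 0 ≤ pr i)
    {k : ℕ} (hk1 : 1 ≤ k) (hkn : k ≤ n)
    {ψ : ℕ → ℝ → ℝ} (hψm : ∀ i, Measurable (ψ i)) (hψint : ∀ i, i ≤ B → Integrable (ψ i) φ) :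
    ∫ ω, ψ (Earr k ω) (h k ω) ∂μ = ∑ i ∈ Finset.range (B + 1), pr i * ∫ x, ψ i x ∂φ := by
  have hcomp : ∀ i, i ≤ B → Integrable (fun ω => ψ i (h k ω)) μ := by
    intro i hi
    have h1 : Integrable (ψ i) (Measure.map (h k) μ) := by
      rw [hlaw k hk1 hkn]; exact hψint i hi
    exact (integrable_map_measure (hψm i).aestronglyMeasurable (hhm k).aemeasurable).mp h1
  have hIm : ∀ i, i ≤ B → ∫ ω, ψ i (h k ω) ∂μ = ∫ x, ψ i x ∂φ := by
    intro i hi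
    rw [← hlaw k hk1 hkn]
    exact (integral_map (hhm k).aemeasurable (hψm i).aestronglyMeasurable).symm
  rw [integral_repr (μ := μ) (B := B) (hEm k) (hEB k)
    (G := fun i ω => ψ i (h k ω)) (fun m hm => hcomp m hm)]
  refine Finset.sum_congr rfl fun i hi => ?_
  have hiB : i ≤ B := by simp only [Finset.mem_range] at hi; omega
  set X1 : Ω → ℝ := fun ω => Set.indicator ({i} : Set ℕ) (fun _ => (1 : ℝ)) (Earr k ω) with hX1def
  set Y1 : Ω → ℝ := fun ω => ψ i (h k ω) with hY1def
  have hI : IndepFun X1 Y1 μ :=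
    (hpair k hk1 hkn).comp (measurable_const.indicator (measurableSet_singleton i)) (hψm i)
  have hmeas_s : MeasurableSet {ω | Earr k ω = i} := hEm k (measurableSet_singleton i)
  have hX1eq : X1 = Set.indicator {ω | Earr k ω = i} (fun _ => (1 : ℝ)) := by
    funext ω
    show Set.indicator ({i} : Set ℕ) (fun _ => (1:ℝ)) (Earr k ω) = _
    by_cases hω : Earr k ω = i
    · rw [Set.indicator_of_mem (show Earr k ω ∈ ({i} : Set ℕ) from hω),
        Set.indicator_of_mem (show ω ∈ {ω' | Earr k ω' = i} from hω)]
    · rw [Set.indicator_of_notMem (show Earr k ω ∉ ({i} : Set ℕ) from hω),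
        Set.indicator_of_notMem (show ω ∉ {ω' | Earr k ω' = i} from hω)]
  have hX1int : Integrable X1 μ := by
    rw [hX1eq]; exact (integrable_const 1).indicator hmeas_s
  have hprod : Set.indicator {ω | Earr k ω = i} Y1 = X1 * Y1 := by
    funext ω
    show _ = (fun ω => Set.indicator ({i} : Set ℕ) (fun _ => (1:ℝ)) (Earr k ω)) ω * Y1 ω
    simp only
    by_cases hω : Earr k ω = i
    · rw [Set.indicator_of_mem (show ω ∈ {ω' | Earr k ω' = i} from hω),
        Set.indicator_of_mem (show Earr k ω ∈ ({i} : Set ℕ) from hω), one_mul]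
    · rw [Set.indicator_of_notMem (show ω ∉ {ω' | Earr k ω' = i} from hω),
        Set.indicator_of_notMem (show Earr k ω ∉ ({i} : Set ℕ) from hω), zero_mul]
  have key : integral μ (X1 * Y1) = integral μ X1 * integral μ Y1 :=
    hI.integral_mul_eq_mul_integral hX1int.aestronglyMeasurable (hcomp i hiB).aestronglyMeasurable
  have hX1val : integral μ X1 = pr i := by
    rw [hX1eq, integral_indicator_const (1 : ℝ) hmeas_s, Measure.real, hEpr k hk1 hkn i hiB]
    simp [ENNReal.toReal_ofReal (hpr0 i)]
  calc ∫ ω, Set.indicator {ω' | Earr k ω' = i} (fun ω' => ψ i (h k ω')) ω ∂μ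
      = integral μ (X1 * Y1) := by rw [← hprod]
    _ = pr i * ∫ x, ψ i x ∂φ := by rw [key, hX1val, hY1def, hIm i hiB]

/-- Integrability of `alphaD g M ∘ h k` on `Ω`. -/
lemma integrable_alphaD_comp (hn : 1 ≤ n) (hhm : ∀ k, Measurable (h k))
    (hlaw : ∀ k, 1 ≤ k → k ≤ n → Measure.map (h k) μ = φ)
    (hint : Integrable (fun x => Real.log (1 + (B : ℝ) * x)) φ)
    (hφpos : ∀ᵐ x ∂φ, 0 ≤ x)
    (g : ℕ → ℝ) {M : ℕ} (hM : M ≤ B) {k : ℕ} (hk1 : 1 ≤ k) (hkn : k ≤ n) :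
    Integrable (fun ω => alphaD g M (h k ω)) μ := by
  have h1 : Integrable (alphaD g M) (Measure.map (h k) μ) := by
    rw [hlaw k hk1 hkn]; exact integrable_alphaD hint hφpos g hM
  exact (integrable_map_measure (measurable_alphaD g M).aestronglyMeasurable
    (hhm k).aemeasurable).mp h1

set_option maxHeartbeats 1000000 in
/-- The tower lemma: integrating out slot `k` against a `hist (k-1)`-measurable state. -/
lemma tower (hn : 1 ≤ n) (hEm : ∀ k, Measurable (Earr k)) (hhm : ∀ k, Measurable (h k))
    (hlaw : ∀ k, 1 ≤ k → k ≤ n → Measure.map (h k) μ = φ)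
    (hint : Integrable (fun x => Real.log (1 + (B : ℝ) * x)) φ)
    (hφpos : ∀ᵐ x ∂φ, 0 ≤ x)
    (hEB : ∀ k ω, Earr k ω ≤ B)
    (hEpr : ∀ k, 1 ≤ k → k ≤ n → ∀ i, i ≤ B → μ {ω | Earr k ω = i} = ENNReal.ofReal (pr i))
    (hpair : ∀ k, 1 ≤ k → k ≤ n → IndepFun (Earr k) (h k) μ)
    (hpr0 : ∀ i, 0 ≤ pr i)
    (hindep : iIndepFun (m := fun _ : Fin n => (inferInstance : MeasurableSpace (ℕ × ℝ)))
      (fun k ω => (Earr (k.1 + 1) ω, h (k.1 + 1) ω)) μ)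
    (g : ℕ → ℝ) {k : ℕ} (hk1 : 1 ≤ k) (hkn : k ≤ n) {Y : Ω → ℕ}
    (hYhist : Measurable[hist Earr h (k - 1)] Y) (hYB : ∀ ω, Y ω ≤ B)
    {Γ : ℕ → ℝ}
    (hΓ : ∀ m, m ≤ B → Γ m
      = ∑ i ∈ Finset.range (B + 1), pr i * ∫ x, alphaD g (min (m + i) B) x ∂φ) :
    ∫ ω, alphaD g (min (Y ω + Earr k ω) B) (h k ω) ∂μ = ∫ ω, Γ (Y ω) ∂μ := by
  have hY : Measurable Y := hYhist.mono (hist_le_ambient hEm hhm (k - 1)) le_rfl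
  -- integrability of the slot-k integrand for a fixed state m
  have hGint : ∀ m, m ≤ B →
      Integrable (fun ω => alphaD g (min (m + Earr k ω) B) (h k ω)) μ := by
    intro m hm
    exact integrable_repr (hEm k) (hEB k)
      (G := fun i ω => alphaD g (min (m + i) B) (h k ω))
      (fun i hi => integrable_alphaD_comp hn hhm hlaw hint hφpos g (min_le_right _ _) hk1 hkn)
  -- decompose over the values of Y
  rw [integral_repr (μ := μ) (B := B) hY hYB
    (G := fun m ω => alphaD g (min (m + Earr k ω) B) (h k ω)) hGint]
  rw [integral_repr (μ := μ) (B := B) hY hYB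
    (G := fun m _ => Γ m) (fun m _ => integrable_const (Γ m))]
  refine Finset.sum_congr rfl fun m hm => ?_
  have hmB : m ≤ B := by simp only [Finset.mem_range] at hm; omega
  have hsY : MeasurableSet[hist Earr h (k - 1)] {ω | Y ω = m} :=
    hYhist (measurableSet_singleton m)
  have hψm : Measurable (fun p : ℕ × ℝ => alphaD g (min (m + p.1) B) p.2) := by
    have := measurable_from_prod_countable_left
      (f := fun q : ℝ × ℕ => alphaD g (min (m + q.2) B) q.1)
      (fun i => measurable_alphaD g (min (m + i) B))
    exact this.comp measurable_swap
  have hfac := indicator_integral_factor hEm hhm hindep hk1 hkn hsY hψm (hGint m hmB)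
  rw [hfac]
  have hslot := slot_expectation hEm hhm hlaw hEB hEpr hpair hpr0 hk1 hkn
    (ψ := fun i x => alphaD g (min (m + i) B) x)
    (fun i => measurable_alphaD g (min (m + i) B))
    (fun i _ => integrable_alphaD hint hφpos g (min_le_right _ _))
  rw [hslot]
  have hYm : MeasurableSet {ω | Y ω = m} := hY (measurableSet_singleton m)
  rw [integral_indicator_const (Γ m) hYm]
  rw [smul_eq_mul, hΓ m hmB]
  rfl

/-- `gAuxD` recursion rewritten uniformly via `min`. -/
lemma gAuxD_succ_eq (j m : ℕ) (hm : m ≤ B) :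
    gAuxD φ B pr (j + 1) m
      = ∑ i ∈ Finset.range (B + 1),
          pr i * ∫ x, alphaD (gAuxD φ B pr j) (min (m + i) B) x ∂φ := by
  have hsplit : ∑ i ∈ Finset.range (B + 1),
      pr i * ∫ x, alphaD (gAuxD φ B pr j) (min (m + i) B) x ∂φ
      = (∑ i ∈ Finset.range (B - m),
          pr i * ∫ x, alphaD (gAuxD φ B pr j) (min (m + i) B) x ∂φ)
        + ∑ i ∈ Finset.Icc (B - m) B,
          pr i * ∫ x, alphaD (gAuxD φ B pr j) (min (m + i) B) x ∂φ := by
    rw [Finset.range_eq_Ico, Finset.range_eq_Ico, ← Finset.Ico_add_one_right_eq_Icc (B - m) B,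
      Finset.sum_Ico_consecutive _ (Nat.zero_le _) (by omega), ← Finset.range_eq_Ico]
  rw [hsplit, gAuxD]
  congr 1
  · refine Finset.sum_congr rfl fun i hi => ?_
    have : min (m + i) B = i + m := by
      simp only [Finset.mem_range] at hi
      omega
    rw [this]
  · rw [Finset.sum_mul]
    refine Finset.sum_congr rfl fun i hi => ?_
    have : min (m + i) B = B := by
      simp only [Finset.mem_Icc] at hi
      omega
    rw [this]

lemma gAuxD_zero_eq (hφpos : ∀ᵐ x ∂φ, 0 ≤ x) (m : ℕ) :
    gAuxD φ B pr 0 m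
      = ∑ i ∈ Finset.range (B + 1),
          pr i * ∫ x, alphaD (fun _ => 0) (min (m + i) B) x ∂φ := by
  rw [gAuxD]
  refine Finset.sum_congr rfl fun i _ => ?_
  congr 1
  refine integral_congr_ae ?_
  filter_upwards [hφpos] with x hx
  rw [alphaD_zero_fun hx, mul_comm]

end Prob

/-! the greedy policy -/

noncomputable def gcar (n B : ℕ) (φ : Measure ℝ) (pr : ℕ → ℝ) (Earr : ℕ → Ω → ℕ)
    (h : ℕ → Ω → ℝ) : ℕ → Ω → ℕ
  | 0 => fun _ => 0
  | k + 1 => fun ω =>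
      min (gcar n B φ pr Earr h k ω + Earr (k + 1) ω) B
        - pick (fun l => gammaSlotD n φ B pr (k + 2) l)
            (min (gcar n B φ pr Earr h k ω + Earr (k + 1) ω) B) (h (k + 1) ω)

noncomputable def gpol (n B : ℕ) (φ : Measure ℝ) (pr : ℕ → ℝ) (Earr : ℕ → Ω → ℕ)
    (h : ℕ → Ω → ℝ) : ℕ → Ω → ℕ
  | 0 => fun _ => 0
  | k + 1 => fun ω => pick (fun l => gammaSlotD n φ B pr (k + 2) l)
      (min (gcar n B φ pr Earr h k ω + Earr (k + 1) ω) B) (h (k + 1) ω)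

section Greedy

variable {n B : ℕ} {pr : ℕ → ℝ} {φ : Measure ℝ}

lemma carry_gpol (k : ℕ) :
    carry B Earr (gpol n B φ pr Earr h) k = gcar n B φ pr Earr h k := by
  induction k with
  | zero => rfl
  | succ k ih =>
      funext ω
      show min (carry B Earr (gpol n B φ pr Earr h) k ω + Earr (k + 1) ω) B
          - gpol n B φ pr Earr h (k + 1) ω = _
      rw [ih]
      rfl

lemma gpol_eq {k : ℕ} (hk : 1 ≤ k) (ω : Ω) :
    gpol n B φ pr Earr h k ω
      = pick (fun l => gammaSlotD n φ B pr (k + 1) l)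
          (avail B Earr (gpol n B φ pr Earr h) k ω) (h k ω) := by
  obtain ⟨m, rfl⟩ : ∃ m, k = m + 1 := ⟨k - 1, by omega⟩
  show pick _ (min (gcar n B φ pr Earr h m ω + Earr (m + 1) ω) B) (h (m + 1) ω) = _
  rw [avail, Nat.add_sub_cancel, carry_gpol]

lemma gpol_le_avail {k : ℕ} (hk : 1 ≤ k) (ω : Ω) :
    gpol n B φ pr Earr h k ω ≤ avail B Earr (gpol n B φ pr Earr h) k ω := by
  rw [gpol_eq hk ω]
  exact pick_le _ _ _

lemma measurable_gcar_hist (hEm : ∀ k, Measurable (Earr k)) (hhm : ∀ k, Measurable (h k)) :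
    ∀ k, Measurable[hist Earr h k] (gcar n B φ pr Earr h k) := by
  intro k
  induction k with
  | zero => exact measurable_const
  | succ k ih =>
      have hc : Measurable[hist Earr h (k + 1)] (gcar n B φ pr Earr h k) :=
        ih.mono (hist_mono (Nat.le_succ k)) le_rfl
      have hE : Measurable[hist Earr h (k + 1)] (Earr (k + 1)) :=
        measurable_Earr_hist' (by omega)
      have hu : Measurable[hist Earr h (k + 1)]
          (fun ω => min (gcar n B φ pr Earr h k ω + Earr (k + 1) ω) B) :=
        (measurable_of_countable (fun p : ℕ × ℕ => min (p.1 + p.2) B)).comp (hc.prodMk hE)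
      have hh : Measurable[hist Earr h (k + 1)] (h (k + 1)) := measurable_h_hist' (by omega)
      have hp : Measurable[hist Earr h (k + 1)] (fun ω =>
          pick (fun l => gammaSlotD n φ B pr (k + 2) l)
            (min (gcar n B φ pr Earr h k ω + Earr (k + 1) ω) B) (h (k + 1) ω)) :=
        measurable_pick_comp _ hu hh
      exact (measurable_of_countable (fun p : ℕ × ℕ => p.1 - p.2)).comp (hu.prodMk hp)

lemma measurable_gpol_hist (hEm : ∀ k, Measurable (Earr k)) (hhm : ∀ k, Measurable (h k))
    {k : ℕ} (hk : 1 ≤ k) : Measurable[hist Earr h k] (gpol n B φ pr Earr h k) := by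
  obtain ⟨m, rfl⟩ : ∃ m, k = m + 1 := ⟨k - 1, by omega⟩
  have hc : Measurable[hist Earr h (m + 1)] (gcar n B φ pr Earr h m) :=
    (measurable_gcar_hist hEm hhm m).mono (hist_mono (Nat.le_succ m)) le_rfl
  have hE : Measurable[hist Earr h (m + 1)] (Earr (m + 1)) :=
    measurable_Earr_hist' (by omega)
  have hu : Measurable[hist Earr h (m + 1)]
      (fun ω => min (gcar n B φ pr Earr h m ω + Earr (m + 1) ω) B) :=
    (measurable_of_countable (fun p : ℕ × ℕ => min (p.1 + p.2) B)).comp (hc.prodMk hE)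
  have hh : Measurable[hist Earr h (m + 1)] (h (m + 1)) := measurable_h_hist' (by omega)
  exact measurable_pick_comp _ hu hh

lemma gpol_isPolicy (hEm : ∀ k, Measurable (Earr k)) (hhm : ∀ k, Measurable (h k)) :
    IsPolicy n B Earr h (gpol n B φ pr Earr h) :=
  ⟨fun k hk1 _ ω => gpol_le_avail hk1 ω, fun k hk1 _ => measurable_gpol_hist hEm hhm hk1⟩

lemma gammaSlot_top : (fun l => gammaSlotD n φ B pr (n + 1) l) = (fun _ => (0 : ℝ)) := by
  funext l
  rw [gammaSlotD, if_neg (by omega)]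

lemma gammaSlot_lt {k : ℕ} (hk : k < n) :
    (fun l => gammaSlotD n φ B pr (k + 1) l) = gAuxD φ B pr (n - k - 1) := by
  funext l
  rw [gammaSlotD, if_pos (by omega), Nat.sub_sub]

/-- greedy pointwise optimality at slot `k`. -/
lemma gpol_pointwise {k : ℕ} (hk : 1 ≤ k) (ω : Ω) :
    alphaD (fun l => gammaSlotD n φ B pr (k + 1) l)
        (avail B Earr (gpol n B φ pr Earr h) k ω) (h k ω)
      = Real.log (1 + (gpol n B φ pr Earr h k ω : ℝ) * h k ω)
        + gammaSlotD n φ B pr (k + 1)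
            (avail B Earr (gpol n B φ pr Earr h) k ω - gpol n B φ pr Earr h k ω) := by
  rw [gpol_eq hk ω]
  exact alphaD_pick _ _ _

end Greedy

section Main

variable {μ : Measure Ω} [IsProbabilityMeasure μ] {n B : ℕ} {pr : ℕ → ℝ}
  {φ : Measure ℝ} [IsProbabilityMeasure φ]

lemma integrable_log_G (hn : 1 ≤ n) (hhm : ∀ k, Measurable (h k))
    (hlaw : ∀ k, 1 ≤ k → k ≤ n → Measure.map (h k) μ = φ)
    (hpos : ∀ k ω, 0 ≤ h k ω)
    (hint : Integrable (fun x => Real.log (1 + (B : ℝ) * x)) φ)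
    {G : Ω → ℕ} (hG : Measurable G) (hGB : ∀ ω, G ω ≤ B) {k : ℕ}
    (hk1 : 1 ≤ k) (hkn : k ≤ n) :
    Integrable (fun ω => Real.log (1 + (G ω : ℝ) * h k ω)) μ := by
  have hm : Measurable (fun x : ℝ => Real.log (1 + (B : ℝ) * x)) :=
    Real.measurable_log.comp (measurable_const.add (measurable_id.const_mul _))
  have hbound : Integrable (fun ω => Real.log (1 + (B : ℝ) * h k ω)) μ := by
    have h1 : Integrable (fun x => Real.log (1 + (B : ℝ) * x)) (Measure.map (h k) μ) := by
      rw [hlaw k hk1 hkn]; exact hint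
    exact (integrable_map_measure hm.aestronglyMeasurable (hhm k).aemeasurable).mp h1
  refine Integrable.mono' hbound ?_ (ae_of_all _ fun ω => ?_)
  · exact (Real.measurable_log.comp (measurable_const.add
      (((measurable_of_countable (fun m : ℕ => (m : ℝ))).comp hG).mul
        (hhm k)))).aestronglyMeasurable
  · rw [Real.norm_eq_abs, abs_of_nonneg (log_term_nonneg (hpos k ω) (G ω))]
    exact log_term_mono (hpos k ω) (hGB ω)

lemma payoff_le_aux (hn : 1 ≤ n) (hpr0 : ∀ i, 0 ≤ pr i)
    (hEm : ∀ k, Measurable (Earr k)) (hhm : ∀ k, Measurable (h k))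
    (hlaw : ∀ k, 1 ≤ k → k ≤ n → Measure.map (h k) μ = φ)
    (hpos : ∀ k ω, 0 ≤ h k ω)
    (hint : Integrable (fun x => Real.log (1 + (B : ℝ) * x)) φ)
    (hEB : ∀ k ω, Earr k ω ≤ B)
    (hEpr : ∀ k, 1 ≤ k → k ≤ n → ∀ i, i ≤ B → μ {ω | Earr k ω = i} = ENNReal.ofReal (pr i))
    (hindep : iIndepFun (m := fun _ : Fin n => (inferInstance : MeasurableSpace (ℕ × ℝ)))
      (fun k ω => (Earr (k.1 + 1) ω, h (k.1 + 1) ω)) μ)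
    (hpair : ∀ k, 1 ≤ k → k ≤ n → IndepFun (Earr k) (h k) μ)
    {F : ℕ → Ω → ℕ} (hF : IsPolicy n B Earr h F)
    (heq : ∀ k, 1 ≤ k → k ≤ n → ∀ ω,
      Real.log (1 + (F k ω : ℝ) * h k ω)
          + gammaSlotD n φ B pr (k + 1) (avail B Earr F k ω - F k ω)
        = alphaD (fun l => gammaSlotD n φ B pr (k + 1) l) (avail B Earr F k ω) (h k ω)) :
    ∀ d, d < n →
      ∫ ω, ∑ j ∈ Finset.Icc (n - d) n, Real.log (1 + (F j ω : ℝ) * h j ω) ∂μ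
        = ∫ ω, gAuxD φ B pr d (carry B Earr F (n - d - 1) ω) ∂μ := by
  have hφpos : ∀ᵐ x ∂φ, 0 ≤ x := phi_ae_nonneg hn hhm hlaw hpos
  have hFmamb : ∀ k, 1 ≤ k → k ≤ n → Measurable (F k) := fun k hk1 hkn =>
    (hF.2 k hk1 hkn).mono (hist_le_ambient hEm hhm k) le_rfl
  have hFB : ∀ k, 1 ≤ k → k ≤ n → ∀ ω, F k ω ≤ B := fun k hk1 hkn ω =>
    le_trans (hF.1 k hk1 hkn ω) (avail_le B F k ω)
  have hLint : ∀ k, 1 ≤ k → k ≤ n →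
      Integrable (fun ω => Real.log (1 + (F k ω : ℝ) * h k ω)) μ := fun k hk1 hkn =>
    integrable_log_G hn hhm hlaw hpos hint (hFmamb k hk1 hkn) (hFB k hk1 hkn) hk1 hkn
  have hcarrym : ∀ k, k ≤ n → Measurable (carry B Earr F k) := fun k hk =>
    (measurable_carry_hist hEm hhm hF.2 k hk).mono (hist_le_ambient hEm hhm k) le_rfl
  have hαint : ∀ (g : ℕ → ℝ) (k : ℕ), 1 ≤ k → k ≤ n →
      Integrable (fun ω =>
        alphaD g (min (carry B Earr F (k - 1) ω + Earr k ω) B) (h k ω)) μ := by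
    intro g k hk1 hkn
    refine integrable_repr (μ := μ) (B := B)
      (Y := fun ω => min (carry B Earr F (k - 1) ω + Earr k ω) B)
      ((measurable_of_countable (fun p : ℕ × ℕ => min (p.1 + p.2) B)).comp
        ((hcarrym (k - 1) (by omega)).prodMk (hEm k)))
      (fun ω => min_le_right _ _)
      (G := fun u ω => alphaD g u (h k ω))
      (fun u hu => integrable_alphaD_comp hn hhm hlaw hint hφpos g hu hk1 hkn)
  have hΓint : ∀ (Γ : ℕ → ℝ) (k : ℕ), k ≤ n →
      Integrable (fun ω => Γ (carry B Earr F k ω)) μ := fun Γ k hk =>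
    integrable_repr (μ := μ) (B := B) (hcarrym k hk) (carry_le B F k)
      (G := fun m _ => Γ m) (fun m _ => integrable_const (Γ m))
  intro d
  induction d with
  | zero =>
    intro _
    simp only [Nat.sub_zero, Finset.Icc_self, Finset.sum_singleton]
    have hroof := tower hn hEm hhm hlaw hint hφpos hEB hEpr hpair hpr0 hindep
      (fun _ => (0 : ℝ)) hn le_rfl
      (Y := carry B Earr F (n - 1))
      (measurable_carry_hist hEm hhm hF.2 (n - 1) (by omega))
      (carry_le B F (n - 1))
      (Γ := gAuxD φ B pr 0) (fun m _ => gAuxD_zero_eq hφpos m)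
    rw [← hroof]
    refine integral_congr_ae (ae_of_all _ fun ω => ?_)
    have h0 := heq n hn le_rfl ω
    rw [gammaSlot_top] at h0
    rw [show gammaSlotD n φ B pr (n + 1) (avail B Earr F n ω - F n ω) = 0 from by
      rw [gammaSlotD, if_neg (by omega)]] at h0
    have h0' : Real.log (1 + (F n ω : ℝ) * h n ω) + 0
        = alphaD (fun _ => (0 : ℝ))
            (min (carry B Earr F (n - 1) ω + Earr n ω) B) (h n ω) := h0
    show Real.log (1 + (F n ω : ℝ) * h n ω)
        = alphaD (fun _ => (0 : ℝ)) (min (carry B Earr F (n - 1) ω + Earr n ω) B) (h n ω)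
    rw [← h0', add_zero]
  | succ d ih =>
    intro hd
    have hd' : d < n := by omega
    have hk1 : 1 ≤ n - (d + 1) := by omega
    have hkn : n - (d + 1) ≤ n := by omega
    set k := n - (d + 1) with hkdef
    have hkltn : k < n := by omega
    have hnd1 : n - d - 1 = k := by omega
    have hnd : n - d = k + 1 := by omega
    have ih' := ih hd'
    rw [hnd1, hnd] at ih'
    have hknotmem : k ∉ Finset.Icc (k + 1) n := by simp
    have hsplit : Finset.Icc k n = insert k (Finset.Icc (k + 1) n) := by
      ext x; simp only [Finset.mem_Icc, Finset.mem_insert]; omega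
    have hsum : ∀ ω, ∑ j ∈ Finset.Icc k n, Real.log (1 + (F j ω : ℝ) * h j ω)
        = Real.log (1 + (F k ω : ℝ) * h k ω)
          + ∑ j ∈ Finset.Icc (k + 1) n, Real.log (1 + (F j ω : ℝ) * h j ω) := fun ω => by
      rw [hsplit, Finset.sum_insert hknotmem]
    have htail_int : Integrable
        (fun ω => ∑ j ∈ Finset.Icc (k + 1) n, Real.log (1 + (F j ω : ℝ) * h j ω)) μ :=
      integrable_finset_sum _ fun j hj =>
        hLint j (by simp only [Finset.mem_Icc] at hj; omega)
          (by simp only [Finset.mem_Icc] at hj; omega)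
    have hg : (fun l => gammaSlotD n φ B pr (k + 1) l) = gAuxD φ B pr d := by
      rw [gammaSlot_lt hkltn, show n - k - 1 = d by omega]
    have hroof := tower hn hEm hhm hlaw hint hφpos hEB hEpr hpair hpr0 hindep
      (gAuxD φ B pr d) hk1 hkn
      (Y := carry B Earr F (k - 1))
      (measurable_carry_hist hEm hhm hF.2 (k - 1) (by omega))
      (carry_le B F (k - 1))
      (Γ := gAuxD φ B pr (d + 1)) (fun m hm => gAuxD_succ_eq d m hm)
    calc ∫ ω, ∑ j ∈ Finset.Icc k n, Real.log (1 + (F j ω : ℝ) * h j ω) ∂μ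
        = ∫ ω, (Real.log (1 + (F k ω : ℝ) * h k ω)
            + ∑ j ∈ Finset.Icc (k + 1) n, Real.log (1 + (F j ω : ℝ) * h j ω)) ∂μ := by
          simp only [hsum]
      _ = (∫ ω, Real.log (1 + (F k ω : ℝ) * h k ω) ∂μ)
            + ∫ ω, ∑ j ∈ Finset.Icc (k + 1) n, Real.log (1 + (F j ω : ℝ) * h j ω) ∂μ :=
          integral_add (hLint k hk1 hkn) htail_int
      _ = (∫ ω, Real.log (1 + (F k ω : ℝ) * h k ω) ∂μ)
            + ∫ ω, gAuxD φ B pr d (carry B Earr F k ω) ∂μ := by rw [ih']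
      _ = ∫ ω, (Real.log (1 + (F k ω : ℝ) * h k ω)
            + gAuxD φ B pr d (carry B Earr F k ω)) ∂μ :=
          (integral_add (hLint k hk1 hkn) (hΓint (gAuxD φ B pr d) k (by omega))).symm
      _ = ∫ ω, alphaD (gAuxD φ B pr d)
            (min (carry B Earr F (k - 1) ω + Earr k ω) B) (h k ω) ∂μ := by
          refine integral_congr_ae (ae_of_all _ fun ω => ?_)
          have h0 := heq k hk1 hkn ω
          rw [hg] at h0
          rw [show gammaSlotD n φ B pr (k + 1) (avail B Earr F k ω - F k ω)
              = gAuxD φ B pr d (avail B Earr F k ω - F k ω) from congrFun hg _] at h0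
          have h0' : Real.log (1 + (F k ω : ℝ) * h k ω)
              + gAuxD φ B pr d (avail B Earr F k ω - F k ω)
              = alphaD (gAuxD φ B pr d)
                  (min (carry B Earr F (k - 1) ω + Earr k ω) B) (h k ω) := h0
          show Real.log (1 + (F k ω : ℝ) * h k ω)
              + gAuxD φ B pr d (carry B Earr F k ω)
              = alphaD (gAuxD φ B pr d)
                  (min (carry B Earr F (k - 1) ω + Earr k ω) B) (h k ω)
          rw [← h0', carry_succ_eq B F hk1 ω]
      _ = ∫ ω, gAuxD φ B pr (d + 1) (carry B Earr F (k - 1) ω) ∂μ := hroof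

lemma payoff_le_bound (hn : 1 ≤ n) (hpr0 : ∀ i, 0 ≤ pr i)
    (hEm : ∀ k, Measurable (Earr k)) (hhm : ∀ k, Measurable (h k))
    (hlaw : ∀ k, 1 ≤ k → k ≤ n → Measure.map (h k) μ = φ)
    (hpos : ∀ k ω, 0 ≤ h k ω)
    (hint : Integrable (fun x => Real.log (1 + (B : ℝ) * x)) φ)
    (hEB : ∀ k ω, Earr k ω ≤ B)
    (hEpr : ∀ k, 1 ≤ k → k ≤ n → ∀ i, i ≤ B → μ {ω | Earr k ω = i} = ENNReal.ofReal (pr i))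
    (hindep : iIndepFun (m := fun _ : Fin n => (inferInstance : MeasurableSpace (ℕ × ℝ)))
      (fun k ω => (Earr (k.1 + 1) ω, h (k.1 + 1) ω)) μ)
    (hpair : ∀ k, 1 ≤ k → k ≤ n → IndepFun (Earr k) (h k) μ)
    {F : ℕ → Ω → ℕ} (hF : IsPolicy n B Earr h F) :
    ∀ d, d < n →
      ∫ ω, ∑ j ∈ Finset.Icc (n - d) n, Real.log (1 + (F j ω : ℝ) * h j ω) ∂μ
        ≤ ∫ ω, gAuxD φ B pr d (carry B Earr F (n - d - 1) ω) ∂μ := by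
  have hφpos : ∀ᵐ x ∂φ, 0 ≤ x := phi_ae_nonneg hn hhm hlaw hpos
  have hFmamb : ∀ k, 1 ≤ k → k ≤ n → Measurable (F k) := fun k hk1 hkn =>
    (hF.2 k hk1 hkn).mono (hist_le_ambient hEm hhm k) le_rfl
  have hFB : ∀ k, 1 ≤ k → k ≤ n → ∀ ω, F k ω ≤ B := fun k hk1 hkn ω =>
    le_trans (hF.1 k hk1 hkn ω) (avail_le B F k ω)
  have hLint : ∀ k, 1 ≤ k → k ≤ n →
      Integrable (fun ω => Real.log (1 + (F k ω : ℝ) * h k ω)) μ := fun k hk1 hkn =>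
    integrable_log_G hn hhm hlaw hpos hint (hFmamb k hk1 hkn) (hFB k hk1 hkn) hk1 hkn
  have hcarrym : ∀ k, k ≤ n → Measurable (carry B Earr F k) := fun k hk =>
    (measurable_carry_hist hEm hhm hF.2 k hk).mono (hist_le_ambient hEm hhm k) le_rfl
  have hαint : ∀ (g : ℕ → ℝ) (k : ℕ), 1 ≤ k → k ≤ n →
      Integrable (fun ω =>
        alphaD g (min (carry B Earr F (k - 1) ω + Earr k ω) B) (h k ω)) μ := by
    intro g k hk1 hkn
    refine integrable_repr (μ := μ) (B := B)
      (Y := fun ω => min (carry B Earr F (k - 1) ω + Earr k ω) B)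
      ((measurable_of_countable (fun p : ℕ × ℕ => min (p.1 + p.2) B)).comp
        ((hcarrym (k - 1) (by omega)).prodMk (hEm k)))
      (fun ω => min_le_right _ _)
      (G := fun u ω => alphaD g u (h k ω))
      (fun u hu => integrable_alphaD_comp hn hhm hlaw hint hφpos g hu hk1 hkn)
  have hΓint : ∀ (Γ : ℕ → ℝ) (k : ℕ), k ≤ n →
      Integrable (fun ω => Γ (carry B Earr F k ω)) μ := fun Γ k hk =>
    integrable_repr (μ := μ) (B := B) (hcarrym k hk) (carry_le B F k)
      (G := fun m _ => Γ m) (fun m _ => integrable_const (Γ m))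
  intro d
  induction d with
  | zero =>
    intro _
    simp only [Nat.sub_zero, Finset.Icc_self, Finset.sum_singleton]
    have hroof := tower hn hEm hhm hlaw hint hφpos hEB hEpr hpair hpr0 hindep
      (fun _ => (0 : ℝ)) hn le_rfl
      (Y := carry B Earr F (n - 1))
      (measurable_carry_hist hEm hhm hF.2 (n - 1) (by omega))
      (carry_le B F (n - 1))
      (Γ := gAuxD φ B pr 0) (fun m _ => gAuxD_zero_eq hφpos m)
    rw [← hroof]
    refine integral_mono (hLint n hn le_rfl) (hαint (fun _ => (0 : ℝ)) n hn le_rfl)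
      fun ω => ?_
    show Real.log (1 + (F n ω : ℝ) * h n ω)
        ≤ alphaD (fun _ => (0 : ℝ)) (min (carry B Earr F (n - 1) ω + Earr n ω) B) (h n ω)
    have h0 : Real.log (1 + (F n ω : ℝ) * h n ω) + (fun _ => (0 : ℝ)) (avail B Earr F n ω - F n ω)
        ≤ alphaD (fun _ => (0 : ℝ))
            (min (carry B Earr F (n - 1) ω + Earr n ω) B) (h n ω) :=
      le_alphaD (fun _ => (0 : ℝ)) (hF.1 n hn le_rfl ω) (h n ω)
    simpa using h0
  | succ d ih =>
    intro hd
    have hd' : d < n := by omega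
    have hk1 : 1 ≤ n - (d + 1) := by omega
    have hkn : n - (d + 1) ≤ n := by omega
    set k := n - (d + 1) with hkdef
    have hkltn : k < n := by omega
    have hnd1 : n - d - 1 = k := by omega
    have hnd : n - d = k + 1 := by omega
    have ih' := ih hd'
    rw [hnd1, hnd] at ih'
    have hknotmem : k ∉ Finset.Icc (k + 1) n := by simp
    have hsplit : Finset.Icc k n = insert k (Finset.Icc (k + 1) n) := by
      ext x; simp only [Finset.mem_Icc, Finset.mem_insert]; omega
    have hsum : ∀ ω, ∑ j ∈ Finset.Icc k n, Real.log (1 + (F j ω : ℝ) * h j ω)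
        = Real.log (1 + (F k ω : ℝ) * h k ω)
          + ∑ j ∈ Finset.Icc (k + 1) n, Real.log (1 + (F j ω : ℝ) * h j ω) := fun ω => by
      rw [hsplit, Finset.sum_insert hknotmem]
    have htail_int : Integrable
        (fun ω => ∑ j ∈ Finset.Icc (k + 1) n, Real.log (1 + (F j ω : ℝ) * h j ω)) μ :=
      integrable_finset_sum _ fun j hj =>
        hLint j (by simp only [Finset.mem_Icc] at hj; omega)
          (by simp only [Finset.mem_Icc] at hj; omega)
    have hroof := tower hn hEm hhm hlaw hint hφpos hEB hEpr hpair hpr0 hindep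
      (gAuxD φ B pr d) hk1 hkn
      (Y := carry B Earr F (k - 1))
      (measurable_carry_hist hEm hhm hF.2 (k - 1) (by omega))
      (carry_le B F (k - 1))
      (Γ := gAuxD φ B pr (d + 1)) (fun m hm => gAuxD_succ_eq d m hm)
    calc ∫ ω, ∑ j ∈ Finset.Icc k n, Real.log (1 + (F j ω : ℝ) * h j ω) ∂μ
        = ∫ ω, (Real.log (1 + (F k ω : ℝ) * h k ω)
            + ∑ j ∈ Finset.Icc (k + 1) n, Real.log (1 + (F j ω : ℝ) * h j ω)) ∂μ := by
          simp only [hsum]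
      _ = (∫ ω, Real.log (1 + (F k ω : ℝ) * h k ω) ∂μ)
            + ∫ ω, ∑ j ∈ Finset.Icc (k + 1) n, Real.log (1 + (F j ω : ℝ) * h j ω) ∂μ :=
          integral_add (hLint k hk1 hkn) htail_int
      _ ≤ (∫ ω, Real.log (1 + (F k ω : ℝ) * h k ω) ∂μ)
            + ∫ ω, gAuxD φ B pr d (carry B Earr F k ω) ∂μ := by
          exact add_le_add le_rfl ih'
      _ = ∫ ω, (Real.log (1 + (F k ω : ℝ) * h k ω)
            + gAuxD φ B pr d (carry B Earr F k ω)) ∂μ :=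
          (integral_add (hLint k hk1 hkn) (hΓint (gAuxD φ B pr d) k (by omega))).symm
      _ ≤ ∫ ω, alphaD (gAuxD φ B pr d)
            (min (carry B Earr F (k - 1) ω + Earr k ω) B) (h k ω) ∂μ := by
          refine integral_mono
            ((hLint k hk1 hkn).add (hΓint (gAuxD φ B pr d) k (by omega)))
            (hαint (gAuxD φ B pr d) k hk1 hkn) fun ω => ?_
          show Real.log (1 + (F k ω : ℝ) * h k ω)
              + gAuxD φ B pr d (carry B Earr F k ω)
              ≤ alphaD (gAuxD φ B pr d)
                  (min (carry B Earr F (k - 1) ω + Earr k ω) B) (h k ω)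
          rw [carry_succ_eq B F hk1 ω]
          exact le_alphaD (gAuxD φ B pr d) (hF.1 k hk1 hkn ω) (h k ω)
      _ = ∫ ω, gAuxD φ B pr (d + 1) (carry B Earr F (k - 1) ω) ∂μ := hroof

end Main

/-- The optimal expected total payoff (the supremum of `P(F)` over admissible
policies `F`) equals `γ_1^0`. -/
theorem optimal_value_eq_gamma_one_zero
    (μ : Measure Ω) [IsProbabilityMeasure μ]
    (n B : ℕ) (hn : 1 ≤ n) (hB : 1 ≤ B)
    (pr : ℕ → ℝ) (hpr0 : ∀ i, 0 ≤ pr i)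
    (hprsum : ∑ i ∈ Finset.range (B + 1), pr i = 1)
    (φ : Measure ℝ) [IsProbabilityMeasure φ]
    (h : ℕ → Ω → ℝ) (Earr : ℕ → Ω → ℕ)
    (hhm : ∀ k, Measurable (h k)) (hEm : ∀ k, Measurable (Earr k))
    (hlaw : ∀ k, 1 ≤ k → k ≤ n → Measure.map (h k) μ = φ)
    (hpos : ∀ k ω, 0 ≤ h k ω)
    (hint : Integrable (fun x => Real.log (1 + (B : ℝ) * x)) φ)
    (hEB : ∀ k ω, Earr k ω ≤ B)
    (hEpr : ∀ k, 1 ≤ k → k ≤ n → ∀ i, i ≤ B →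
      μ {ω | Earr k ω = i} = ENNReal.ofReal (pr i))
    (hindep : iIndepFun (m := fun _ : Fin n => (inferInstance : MeasurableSpace (ℕ × ℝ)))
      (fun k ω => (Earr (k.1 + 1) ω, h (k.1 + 1) ω)) μ)
    (hpair : ∀ k, 1 ≤ k → k ≤ n → IndepFun (Earr k) (h k) μ) :
    sSup {y : ℝ | ∃ F : ℕ → Ω → ℕ, IsPolicy n B Earr h F ∧ y = payoff μ n h F}
      = gammaSlotD n φ B pr 1 0 := by
  set γ : ℝ := gammaSlotD n φ B pr 1 0 with hγdef
  have hγ : γ = gAuxD φ B pr (n - 1) 0 := by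
    rw [hγdef, gammaSlotD, if_pos hn]
  set S : Set ℝ := {y : ℝ | ∃ F : ℕ → Ω → ℕ, IsPolicy n B Earr h F ∧ y = payoff μ n h F}
    with hSdef
  have hn1 : n - 1 < n := by omega
  have hIcc : n - (n - 1) = 1 := by omega
  have hcz : n - (n - 1) - 1 = 0 := by omega
  -- any policy is bounded by γ
  have hub : ∀ y ∈ S, y ≤ γ := by
    rintro y ⟨F, hF, rfl⟩
    have hb := payoff_le_bound hn hpr0 hEm hhm hlaw hpos hint hEB hEpr hindep hpair hF
      (n - 1) hn1
    rw [hcz, hIcc] at hb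
    have hconst : ∫ ω, gAuxD φ B pr (n - 1) (carry B Earr F 0 ω) ∂μ
        = gAuxD φ B pr (n - 1) 0 := by
      simp [carry]
    rw [hconst] at hb
    rw [hγ]
    exact hb
  -- the greedy policy achieves γ
  have hmem : γ ∈ S := by
    refine ⟨gpol n B φ pr Earr h, gpol_isPolicy hEm hhm, ?_⟩
    have hbe := payoff_le_aux hn hpr0 hEm hhm hlaw hpos hint hEB hEpr hindep hpair
      (gpol_isPolicy hEm hhm)
      (fun k hk1 hkn ω => (gpol_pointwise hk1 ω).symm) (n - 1) hn1
    rw [hcz, hIcc] at hbe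
    have hconst : ∫ ω, gAuxD φ B pr (n - 1)
        (carry B Earr (gpol n B φ pr Earr h) 0 ω) ∂μ = gAuxD φ B pr (n - 1) 0 := by
      simp [carry]
    rw [hconst] at hbe
    rw [hγ, payoff, ← hbe]
  have hbdd : BddAbove S := ⟨γ, fun y hy => hub y hy⟩
  exact le_antisymm (csSup_le ⟨γ, hmem⟩ hub) (le_csSup hbdd hmem)

end EHDiscrete
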